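/- Let D ∈ (0,∞) and let h : ℝ → [0,∞) be continuous, vanishing outside [0,D], and Lipschitz on every compact subset of (0,D); set μ := h·L¹. Let {[a_i,b_i]}_{i∈ℕ} be a countable family of pairwise disjoint closed intervals contained in (0,D). Then P_{([0,D],|·|,μ)}( ⋃_{i∈ℕ} [a_i,b_i] ) ≤ Σ_{i∈ℕ} ( h(a_i) + h(b_i) ). -/

import Mathlib

open Filter MeasureTheory Set Metric Topology ENNReal
open scoped NNReal

/-- The slope (local Lipschitz constant) of `u` at `x`:
`|∇u|(x) = limsup_{y→x} |u(x)-u(y)|/d(x,y)`, interpreted as `0` when `x` is isolated. -/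
noncomputable def slopeAt {X : Type*} [MetricSpace X] (u : X → ℝ) (x : X) : ℝ :=
  Filter.limsup (fun y => |u x - u y| / dist x y) (𝓝[≠] x)

/-- The perimeter of a set `E` in a metric measure space: the infimum of
`liminf_n ∫ |∇u_n| dμ` over sequences of Lipschitz functions converging to `χ_E` in `L¹(μ)`. -/
noncomputable def perimeter {X : Type*} [MetricSpace X] [MeasurableSpace X]
    (μ : Measure X) (E : Set X) : ℝ≥0∞ :=
  sInf { p : ℝ≥0∞ | ∃ u : ℕ → X → ℝ,
    (∀ n, ∃ K : NNReal, LipschitzWith K (u n)) ∧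
    Filter.Tendsto
      (fun n => ∫⁻ x, ENNReal.ofReal |u n x - E.indicator (fun _ => (1:ℝ)) x| ∂μ)
      atTop (𝓝 0) ∧
    p = Filter.liminf (fun n => ∫⁻ x, ENNReal.ofReal (slopeAt (u n) x) ∂μ) atTop }

/-- The outer Minkowski content of `E`:
`μ⁺(E) = liminf_{ε↓0} (μ(E^ε) - μ(E))/ε`, where `E^ε = {x : d(x,E) ≤ ε}`. -/
noncomputable def minkContent {X : Type*} [MetricSpace X] [MeasurableSpace X]
    (μ : Measure X) (E : Set X) : ℝ≥0∞ :=
  Filter.liminf (fun ε : ℝ => (μ (Metric.cthickening ε E) - μ E) / ENNReal.ofReal ε) (𝓝[>] 0)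

/-- Perimeter computed in a metric measure subspace `(S, Euclidean distance, μ)` of `ℝ`. -/
noncomputable def perimeterOn (S : Set ℝ) (μ : Measure ℝ) (E : Set ℝ) : ℝ≥0∞ :=
  perimeter (Measure.comap (Subtype.val : S → ℝ) μ) ((Subtype.val : S → ℝ) ⁻¹' E)

/-- Outer Minkowski content computed in a metric measure subspace `(S, Euclidean distance, μ)`. -/
noncomputable def minkOn (S : Set ℝ) (μ : Measure ℝ) (E : Set ℝ) : ℝ≥0∞ :=
  minkContent (Measure.comap (Subtype.val : S → ℝ) μ) ((Subtype.val : S → ℝ) ⁻¹' E)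

/-- The measure `h · L¹` on `ℝ`. -/
noncomputable def densMeasure (h : ℝ → ℝ) : Measure ℝ :=
  (volume : Measure ℝ).withDensity (fun t => ENNReal.ofReal (h t))

/-- The distortion coefficients `σ^{(t)}_{K,N'}(θ)`. -/
noncomputable def sigmaCoef (K N' : ℝ) (t θ : ℝ) : ℝ≥0∞ :=
  if N' * Real.pi ^ 2 ≤ K * θ ^ 2 then ∞
  else if 0 < K * θ ^ 2 then
    ENNReal.ofReal (Real.sin (t * θ * Real.sqrt (K / N')) / Real.sin (θ * Real.sqrt (K / N')))
  else if K * θ ^ 2 = 0 ∨ N' = 0 then ENNReal.ofReal t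
  else
    ENNReal.ofReal (Real.sinh (t * θ * Real.sqrt (-K / N')) / Real.sinh (θ * Real.sqrt (-K / N')))

/-- The `CD(K,N)` concavity-type condition for a one-dimensional density `h` on a set `S`:
`h((1-s)t₀+st₁)^{1/(N-1)} ≥ σ^{(1-s)}_{K,N-1}(t₁-t₀) h(t₀)^{1/(N-1)} + σ^{(s)}_{K,N-1}(t₁-t₀) h(t₁)^{1/(N-1)}`. -/
def CDDensity (K N : ℝ) (S : Set ℝ) (h : ℝ → ℝ) : Prop :=
  ∀ s ∈ Set.Icc (0:ℝ) 1, ∀ t₀ ∈ S, ∀ t₁ ∈ S, t₀ < t₁ →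
    sigmaCoef K (N - 1) (1 - s) (t₁ - t₀) * ENNReal.ofReal (h t₀ ^ (1 / (N - 1))) +
        sigmaCoef K (N - 1) s (t₁ - t₀) * ENNReal.ofReal (h t₁ ^ (1 / (N - 1)))
      ≤ ENNReal.ofReal (h ((1 - s) * t₀ + s * t₁) ^ (1 / (N - 1)))

/-- Membership in the family `F^s_{K,N,D}` of synthetic `CD(K,N)` probability densities
supported in `[0,D]`. -/
def memSynthF (K N D : ℝ) (h : ℝ → ℝ) : Prop :=
  (∀ t, 0 ≤ h t) ∧
  Function.support h ⊆ Set.Icc 0 D ∧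
  IsProbabilityMeasure (densMeasure h) ∧
  (1 < N → Continuous h ∧ CDDensity K N (closure (Function.support h)) h) ∧
  (N = 1 → ∀ t₀ ∈ closure (Function.support h), ∀ t₁ ∈ closure (Function.support h),
     h t₀ = h t₁)

/-- tent function: 1 on [a,b], 0 outside [a-δ,b+δ], linear in between. -/
noncomputable def tentFn (a b δ t : ℝ) : ℝ := max 0 (1 - Metric.infDist t (Set.Icc a b) / δ)

lemma tentFn_nonneg (a b δ t : ℝ) : 0 ≤ tentFn a b δ t := le_max_left _ _

lemma tentFn_le_one {δ : ℝ} (hδ : 0 < δ) (a b t : ℝ) : tentFn a b δ t ≤ 1 := by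
  refine max_le zero_le_one ?_
  have h1 : 0 ≤ infDist t (Set.Icc a b) := Metric.infDist_nonneg
  have h2 : 0 ≤ infDist t (Set.Icc a b) / δ := div_nonneg h1 hδ.le
  linarith

lemma tentFn_eq_one {a b : ℝ} (δ : ℝ) {t : ℝ} (ht : t ∈ Set.Icc a b) : tentFn a b δ t = 1 := by
  rw [tentFn, Metric.infDist_zero_of_mem ht, zero_div, sub_zero, max_eq_right zero_le_one]

lemma tentFn_eq_zero_left {a b δ t : ℝ} (hab : a ≤ b) (hδ : 0 < δ) (ht : t < a - δ) :
    tentFn a b δ t = 0 := by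
  have hne : (Set.Icc a b).Nonempty := Set.nonempty_Icc.2 hab
  have h1 : a - t ≤ infDist t (Set.Icc a b) := by
    by_contra hlt
    push_neg at hlt
    obtain ⟨y, hy, hdy⟩ := (Metric.infDist_lt_iff hne).1 hlt
    rw [Real.dist_eq] at hdy
    have h2 : y - t ≤ |t - y| := by rw [abs_sub_comm]; exact le_abs_self _
    linarith [hy.1]
  have h2 : 1 < infDist t (Set.Icc a b) / δ := by
    rw [lt_div_iff₀ hδ]; linarith
  rw [tentFn, max_eq_left (by linarith)]

lemma tentFn_eq_zero_right {a b δ t : ℝ} (hab : a ≤ b) (hδ : 0 < δ) (ht : b + δ < t) :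
    tentFn a b δ t = 0 := by
  have hne : (Set.Icc a b).Nonempty := Set.nonempty_Icc.2 hab
  have h1 : t - b ≤ infDist t (Set.Icc a b) := by
    by_contra hlt
    push_neg at hlt
    obtain ⟨y, hy, hdy⟩ := (Metric.infDist_lt_iff hne).1 hlt
    rw [Real.dist_eq] at hdy
    have h2 : t - y ≤ |t - y| := le_abs_self _
    linarith [hy.2]
  have h2 : 1 < infDist t (Set.Icc a b) / δ := by
    rw [lt_div_iff₀ hδ]; linarith
  rw [tentFn, max_eq_left (by linarith)]

lemma tentFn_eq_zero_of_not_mem {a b δ t : ℝ} (hab : a ≤ b) (hδ : 0 < δ)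
    (ht : t ∉ Set.Icc (a - δ) (b + δ)) : tentFn a b δ t = 0 := by
  rw [Set.mem_Icc, not_and_or, not_le, not_le] at ht
  rcases ht with ht | ht
  · exact tentFn_eq_zero_left hab hδ ht
  · exact tentFn_eq_zero_right hab hδ ht

lemma tentFn_locally_const {a b δ t : ℝ} (hab : a ≤ b) (hδ : 0 < δ)
    (ht : t ∉ Set.Icc (a - δ) a ∪ Set.Icc b (b + δ)) :
    ∃ V : Set ℝ, IsOpen V ∧ t ∈ V ∧ ∀ s ∈ V, tentFn a b δ s = tentFn a b δ t := by
  simp only [Set.mem_union, Set.mem_Icc, not_or, not_and_or, not_le] at ht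
  obtain ⟨h1, h2⟩ := ht
  rcases h1 with h1 | h1
  · exact ⟨Set.Iio (a - δ), isOpen_Iio, h1, fun s hs => by
      rw [tentFn_eq_zero_left hab hδ (Set.mem_Iio.1 hs), tentFn_eq_zero_left hab hδ h1]⟩
  · rcases h2 with h2 | h2
    · refine ⟨Set.Ioo a b, isOpen_Ioo, ⟨h1, h2⟩, fun s hs => ?_⟩
      rw [tentFn_eq_one δ (Set.Ioo_subset_Icc_self hs),
        tentFn_eq_one δ (Set.Ioo_subset_Icc_self ⟨h1, h2⟩)]
    · exact ⟨Set.Ioi (b + δ), isOpen_Ioi, h2, fun s hs => by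
        rw [tentFn_eq_zero_right hab hδ (Set.mem_Ioi.1 hs), tentFn_eq_zero_right hab hδ h2]⟩

lemma lipschitzWith_tentFn (a b : ℝ) {δ : ℝ} (hδ : 0 < δ) :
    LipschitzWith (Real.toNNReal δ⁻¹) (tentFn a b δ) := by
  rw [lipschitzWith_iff_dist_le_mul]
  intro s s'
  rw [Real.dist_eq, Real.dist_eq, Real.coe_toNNReal _ (inv_nonneg.2 hδ.le)]
  set ds := infDist s (Set.Icc a b) with hds
  set ds' := infDist s' (Set.Icc a b) with hds'
  have key : |tentFn a b δ s - tentFn a b δ s'| ≤ |(1 - ds / δ) - (1 - ds' / δ)| := by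
    rw [tentFn, tentFn, max_comm 0 (1 - ds / δ), max_comm 0 (1 - ds' / δ)]
    exact abs_max_sub_max_le_abs _ _ _
  have hA : ds' ≤ ds + |s' - s| := by
    have := Metric.infDist_le_infDist_add_dist (x := s') (y := s) (s := Set.Icc a b)
    rwa [Real.dist_eq] at this
  have hB : ds ≤ ds' + |s - s'| := by
    have := Metric.infDist_le_infDist_add_dist (x := s) (y := s') (s := Set.Icc a b)
    rwa [Real.dist_eq] at this
  have habs : |s' - s| = |s - s'| := abs_sub_comm _ _
  have hd : |ds' - ds| ≤ |s - s'| := by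
    rw [abs_sub_le_iff]
    constructor <;> [linarith [hA, habs]; linarith [hB]]
  calc |tentFn a b δ s - tentFn a b δ s'| ≤ |(1 - ds / δ) - (1 - ds' / δ)| := key
    _ = |ds' - ds| / δ := by
        rw [show (1 - ds / δ) - (1 - ds' / δ) = (ds' - ds) / δ by ring, abs_div, abs_of_pos hδ]
    _ ≤ |s - s'| / δ := by gcongr
    _ = δ⁻¹ * |s - s'| := by ring

lemma slopeAt_le_of_lipschitzOnWith {X : Type*} [MetricSpace X] {v : X → ℝ} {x : X}
    {K : ℝ≥0} {V : Set X} (hV : V ∈ 𝓝 x) (hlip : LipschitzOnWith K v V) :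
    slopeAt v x ≤ K := by
  by_cases hbot : (𝓝[≠] x) = ⊥
  · rw [show slopeAt v x = Filter.limsup (fun y => |v x - v y| / dist x y) (𝓝[≠] x) from rfl,
      hbot, Filter.limsup_eq]
    have huniv : {a : ℝ | ∀ᶠ y in (⊥ : Filter X), |v x - v y| / dist x y ≤ a} = Set.univ := by
      ext a; simp
    rw [huniv, Real.sInf_of_not_bddBelow]
    · exact K.coe_nonneg
    · rintro ⟨c, hc⟩
      have h1 : c ≤ c - 1 := hc (Set.mem_univ (c - 1))
      linarith
  · have hne : (𝓝[≠] x).NeBot := ⟨hbot⟩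
    refine Filter.limsup_le_of_le ?_ ?_
    · exact Filter.IsCoboundedUnder.of_frequently_ge
        (Filter.Eventually.frequently (Filter.Eventually.of_forall fun y =>
          div_nonneg (abs_nonneg _) dist_nonneg))
    · have hx : x ∈ V := mem_of_mem_nhds hV
      filter_upwards [self_mem_nhdsWithin, nhdsWithin_le_nhds hV] with y hy hyV
      have hxy : y ≠ x := hy
      have hdist : (0 : ℝ) < dist x y := dist_pos.2 (Ne.symm hxy)
      rw [div_le_iff₀ hdist]
      calc |v x - v y| = dist (v x) (v y) := (Real.dist_eq _ _).symm
        _ ≤ K * dist x y := (lipschitzOnWith_iff_dist_le_mul.1 hlip) x hx y hyV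

noncomputable def deltaSeq (δ0 : ℕ → ℝ) : ℕ → ℝ
  | 0 => 1
  | n + 1 => min (min (deltaSeq δ0 n) (δ0 n)) (((n : ℝ) + 2)⁻¹)

lemma deltaSeq_pos {δ0 : ℕ → ℝ} (h : ∀ i, 0 < δ0 i) (n : ℕ) : 0 < deltaSeq δ0 n := by
  induction n with
  | zero => norm_num [deltaSeq]
  | succ m ih =>
    rw [deltaSeq]
    exact lt_min (lt_min ih (h m)) (by positivity)

lemma deltaSeq_le {δ0 : ℕ → ℝ} (n i : ℕ) (hi : i < n) : deltaSeq δ0 n ≤ δ0 i := by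
  induction n with
  | zero => exact absurd hi (Nat.not_lt_zero i)
  | succ m ih =>
    rw [deltaSeq]
    rcases Nat.lt_succ_iff_lt_or_eq.1 hi with hi' | rfl
    · exact ((min_le_left _ _).trans (min_le_left _ _)).trans (ih hi')
    · exact (min_le_left _ _).trans (min_le_right _ _)

lemma deltaSeq_small {δ0 : ℕ → ℝ} (n : ℕ) : deltaSeq δ0 n ≤ ((n : ℝ) + 1)⁻¹ := by
  cases n with
  | zero => norm_num [deltaSeq]
  | succ m =>
    rw [deltaSeq]
    refine (min_le_right _ _).trans (le_of_eq ?_)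
    push_cast
    ring_nf



/-- For a continuous density `h` vanishing outside `[0,D]`, Lipschitz on every
compact subset of `(0,D)`, and a countable family of pairwise disjoint closed intervals in
`(0,D)`, the perimeter of their union is at most `Σᵢ (h(aᵢ) + h(bᵢ))`. -/
theorem perimeter_union_le_sum (D : ℝ) (hD : 0 < D) (h : ℝ → ℝ) (hcont : Continuous h)
    (hnonneg : ∀ t, 0 ≤ h t) (hsupp : ∀ t ∉ Set.Icc 0 D, h t = 0)
    (hlip : ∀ s : Set ℝ, IsCompact s → s ⊆ Set.Ioo 0 D → ∃ L : NNReal, LipschitzOnWith L h s)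
    (a b : ℕ → ℝ) (hab : ∀ i, a i ≤ b i)
    (hsub : ∀ i, Set.Icc (a i) (b i) ⊆ Set.Ioo 0 D)
    (hdisj : Pairwise fun i j => Disjoint (Set.Icc (a i) (b i)) (Set.Icc (a j) (b j))) :
    perimeterOn (Set.Icc 0 D) (densMeasure h) (⋃ i, Set.Icc (a i) (b i))
      ≤ ∑' i, ENNReal.ofReal (h (a i) + h (b i)) := by
  classical
  set E : Set ℝ := ⋃ i, Set.Icc (a i) (b i) with hE
  set μ : Measure ℝ := densMeasure h with hμdef
  set S : ℝ≥0∞ := ∑' i, ENNReal.ofReal (h (a i) + h (b i)) with hS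
  -- total finiteness
  obtain ⟨x0, hx0mem, hx0⟩ :=
    isCompact_Icc.exists_isMaxOn (Set.nonempty_Icc.2 hD.le) hcont.continuousOn
  have hx0 : ∀ t ∈ Set.Icc (0:ℝ) D, h t ≤ h x0 := hx0
  have hμuniv : μ Set.univ < ∞ := by
    rw [hμdef, densMeasure, withDensity_apply _ MeasurableSet.univ, Measure.restrict_univ]
    calc ∫⁻ t, ENNReal.ofReal (h t) ∂volume
        ≤ ∫⁻ t, (Set.Icc (0:ℝ) D).indicator (fun _ => ENNReal.ofReal (h x0)) t ∂volume := by
          refine lintegral_mono fun t => ?_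
          by_cases ht : t ∈ Set.Icc (0:ℝ) D
          · rw [Set.indicator_of_mem ht]; exact ENNReal.ofReal_le_ofReal (hx0 t ht)
          · rw [Set.indicator_of_notMem ht, hsupp t ht, ENNReal.ofReal_zero]
      _ = ENNReal.ofReal (h x0) * volume (Set.Icc (0:ℝ) D) :=
          lintegral_indicator_const measurableSet_Icc _
      _ < ∞ := by
          rw [Real.volume_Icc]
          exact ENNReal.mul_lt_top ENNReal.ofReal_lt_top ENNReal.ofReal_lt_top
  have htsum_fin : (∑' i, μ (Set.Icc (a i) (b i))) ≠ ∞ := by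
    rw [← measure_iUnion hdisj fun i => measurableSet_Icc]
    exact ((measure_mono (Set.subset_univ _)).trans_lt hμuniv).ne
  -- reduce to ε
  refine ENNReal.le_of_forall_pos_le_add fun ε' hε' hStop => ?_
  set εr : ℝ := (ε' : ℝ) with hεrdef
  have hεrpos : 0 < εr := hε'
  have hofεr : ENNReal.ofReal εr = (ε' : ℝ≥0∞) := ENNReal.ofReal_coe_nnreal
  -- tolerances
  set e : ℕ → ℝ := fun i => εr * (1/2 : ℝ) ^ (i + 2) with he
  have hepos : ∀ i, 0 < e i := fun i => by rw [he]; positivity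
  have hsel : ∀ i : ℕ, ∃ δ1 : ℝ, 0 < δ1 ∧
      (∀ t, |t - a i| ≤ δ1 → h t ≤ h (a i) + e i) ∧
      (∀ t, |t - b i| ≤ δ1 → h t ≤ h (b i) + e i) := by
    intro i
    obtain ⟨d1, hd1, hA⟩ :=
      (Metric.continuousAt_iff.1 (hcont.continuousAt : ContinuousAt h (a i))) (e i) (hepos i)
    obtain ⟨d2, hd2, hB⟩ :=
      (Metric.continuousAt_iff.1 (hcont.continuousAt : ContinuousAt h (b i))) (e i) (hepos i)
    refine ⟨min (d1 / 2) (d2 / 2), by positivity, fun t ht => ?_, fun t ht => ?_⟩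
    · have h1 : dist t (a i) < d1 := by
        rw [Real.dist_eq]
        have := ht.trans (min_le_left _ _)
        linarith
      have h2 := hA h1
      rw [Real.dist_eq, abs_lt] at h2
      linarith [h2.2]
    · have h1 : dist t (b i) < d2 := by
        rw [Real.dist_eq]
        have := ht.trans (min_le_right _ _)
        linarith
      have h2 := hB h1
      rw [Real.dist_eq, abs_lt] at h2
      linarith [h2.2]
  choose δ0 hδ0pos hδ0a hδ0b using hsel
  have hΔpos : ∀ n, 0 < deltaSeq δ0 n := deltaSeq_pos hδ0pos
  have hΔle : ∀ n i, i < n → deltaSeq δ0 n ≤ δ0 i := fun n i => deltaSeq_le n i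
  have hΔtends : Tendsto (fun n => ENNReal.ofReal (deltaSeq δ0 n)) atTop (𝓝 0) := by
    rw [← ENNReal.ofReal_zero]
    refine ENNReal.tendsto_ofReal ?_
    refine squeeze_zero (fun n => (hΔpos n).le) (fun n => deltaSeq_small n) ?_
    have := tendsto_one_div_add_atTop_nhds_zero_nat (𝕜 := ℝ)
    simpa [one_div] using this
  -- ramp sets
  set R : ℕ → ℕ → Set ℝ :=
    fun n i => Set.Icc (a i - deltaSeq δ0 n) (a i) ∪ Set.Icc (b i) (b i + deltaSeq δ0 n) with hR
  have hRmeas : ∀ n i, MeasurableSet (R n i) := fun n i => measurableSet_Icc.union measurableSet_Icc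
  -- measure of ramps
  have hμIccBound : ∀ (p q C : ℝ), (∀ t ∈ Set.Icc p q, h t ≤ C) →
      μ (Set.Icc p q) ≤ ENNReal.ofReal C * ENNReal.ofReal (q - p) := by
    intro p q C hC
    rw [hμdef, densMeasure, withDensity_apply _ measurableSet_Icc]
    calc ∫⁻ t in Set.Icc p q, ENNReal.ofReal (h t) ∂volume
        ≤ ∫⁻ _ in Set.Icc p q, ENNReal.ofReal C ∂volume :=
          setLIntegral_mono' measurableSet_Icc fun t ht => ENNReal.ofReal_le_ofReal (hC t ht)
      _ = ENNReal.ofReal C * volume (Set.Icc p q) := setLIntegral_const _ _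
      _ = ENNReal.ofReal C * ENNReal.ofReal (q - p) := by rw [Real.volume_Icc]
  have hμR : ∀ n i, i < n → μ (R n i) ≤ ENNReal.ofReal (deltaSeq δ0 n) *
      (ENNReal.ofReal (h (a i) + e i) + ENNReal.ofReal (h (b i) + e i)) := by
    intro n i hin
    have hL : μ (Set.Icc (a i - deltaSeq δ0 n) (a i))
        ≤ ENNReal.ofReal (h (a i) + e i) * ENNReal.ofReal (deltaSeq δ0 n) := by
      have hq : a i - (a i - deltaSeq δ0 n) = deltaSeq δ0 n := by ring
      have := hμIccBound (a i - deltaSeq δ0 n) (a i) (h (a i) + e i) (fun t ht => by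
        refine hδ0a i t ?_
        rw [abs_le]
        constructor
        · linarith [ht.1, hΔle n i hin]
        · linarith [ht.2, (hδ0pos i).le])
      rwa [hq] at this
    have hRt : μ (Set.Icc (b i) (b i + deltaSeq δ0 n))
        ≤ ENNReal.ofReal (h (b i) + e i) * ENNReal.ofReal (deltaSeq δ0 n) := by
      have hq : b i + deltaSeq δ0 n - b i = deltaSeq δ0 n := by ring
      have := hμIccBound (b i) (b i + deltaSeq δ0 n) (h (b i) + e i) (fun t ht => by
        refine hδ0b i t ?_
        rw [abs_le]
        constructor
        · linarith [ht.1, (hδ0pos i).le]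
        · linarith [ht.2, hΔle n i hin])
      rwa [hq] at this
    calc μ (R n i) ≤ μ (Set.Icc (a i - deltaSeq δ0 n) (a i))
          + μ (Set.Icc (b i) (b i + deltaSeq δ0 n)) := by rw [hR]; exact measure_union_le _ _
      _ ≤ ENNReal.ofReal (h (a i) + e i) * ENNReal.ofReal (deltaSeq δ0 n)
          + ENNReal.ofReal (h (b i) + e i) * ENNReal.ofReal (deltaSeq δ0 n) := add_le_add hL hRt
      _ = ENNReal.ofReal (deltaSeq δ0 n) *
          (ENNReal.ofReal (h (a i) + e i) + ENNReal.ofReal (h (b i) + e i)) := by ring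
  -- sum bound
  have hsum : ∀ n, (∑ i ∈ Finset.range n,
      (ENNReal.ofReal (h (a i) + e i) + ENNReal.ofReal (h (b i) + e i)))
      ≤ S + ENNReal.ofReal εr := by
    intro n
    have hsplit : ∀ i, ENNReal.ofReal (h (a i) + e i) + ENNReal.ofReal (h (b i) + e i)
        = ENNReal.ofReal (h (a i) + h (b i)) + ENNReal.ofReal (2 * e i) := by
      intro i
      rw [← ENNReal.ofReal_add (add_nonneg (hnonneg _) (hepos i).le)
          (add_nonneg (hnonneg _) (hepos i).le),
        ← ENNReal.ofReal_add (add_nonneg (hnonneg _) (hnonneg _)) (by positivity)]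
      congr 1
      ring
    rw [Finset.sum_congr rfl fun i _ => hsplit i, Finset.sum_add_distrib]
    refine add_le_add ?_ ?_
    · rw [hS]; exact ENNReal.sum_le_tsum _
    · rw [← ENNReal.ofReal_sum_of_nonneg fun i _ => by positivity]
      refine ENNReal.ofReal_le_ofReal ?_
      have hgeo := sum_geometric_two_le n
      have hre : ∀ i ∈ Finset.range n, 2 * e i = εr / 2 * (1/2 : ℝ) ^ i := by
        intro i _; rw [he]; ring
      rw [Finset.sum_congr rfl hre, ← Finset.mul_sum]
      calc εr / 2 * ∑ i ∈ Finset.range n, (1/2 : ℝ) ^ i ≤ εr / 2 * 2 :=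
            mul_le_mul_of_nonneg_left hgeo (by positivity)
        _ = εr := by ring
  -- pointwise slope bound
  have hslope : ∀ n (x : (Set.Icc (0:ℝ) D)),
      ENNReal.ofReal (slopeAt (fun y : (Set.Icc (0:ℝ) D) =>
        min 1 (∑ i ∈ Finset.range n, tentFn (a i) (b i) (deltaSeq δ0 n) (y : ℝ))) x)
      ≤ ∑ i ∈ Finset.range n,
          (R n i).indicator (fun _ => ENNReal.ofReal (deltaSeq δ0 n)⁻¹) (x : ℝ) := by
    intro n x
    set t : ℝ := (x : ℝ) with htdef
    set A : Finset ℕ := (Finset.range n).filter (fun i => t ∈ R n i) with hA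
    have hVsel : ∀ i : ℕ, ∃ V : Set ℝ, IsOpen V ∧ t ∈ V ∧
        (i ∈ Finset.range n \ A → ∀ s ∈ V,
          tentFn (a i) (b i) (deltaSeq δ0 n) s = tentFn (a i) (b i) (deltaSeq δ0 n) t) := by
      intro i
      by_cases hi : i ∈ Finset.range n \ A
      · have hnotR : t ∉ R n i := by
          rcases Finset.mem_sdiff.1 hi with ⟨hir, hiA⟩
          intro hcon
          exact hiA (by rw [hA]; exact Finset.mem_filter.2 ⟨hir, hcon⟩)
        rw [hR] at hnotR
        obtain ⟨V, h1, h2, h3⟩ := tentFn_locally_const (hab i) (hΔpos n) hnotR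
        exact ⟨V, h1, h2, fun _ => h3⟩
      · exact ⟨Set.univ, isOpen_univ, Set.mem_univ _, fun hcon => absurd hcon hi⟩
    choose V hVopen hVmem hVconst using hVsel
    set W : Set ℝ := ⋂ i ∈ Finset.range n, V i with hW
    have hWnhds : W ∈ 𝓝 t :=
      (isOpen_biInter_finset fun i _ => hVopen i).mem_nhds (Set.mem_iInter₂.2 fun i _ => hVmem i)
    set K : ℝ≥0 := A.card * Real.toNNReal (deltaSeq δ0 n)⁻¹ with hK
    have hKcoe : (K : ℝ) = A.card * (deltaSeq δ0 n)⁻¹ := by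
      rw [hK]
      push_cast [Real.coe_toNNReal _ (inv_nonneg.2 (hΔpos n).le)]
      ring
    have hgW : LipschitzOnWith K
        (fun s => ∑ i ∈ Finset.range n, tentFn (a i) (b i) (deltaSeq δ0 n) s) W := by
      rw [lipschitzOnWith_iff_dist_le_mul]
      intro s hs s' hs'
      rw [Real.dist_eq, Real.dist_eq, hKcoe]
      have hdiff : (∑ i ∈ Finset.range n, tentFn (a i) (b i) (deltaSeq δ0 n) s)
          - (∑ i ∈ Finset.range n, tentFn (a i) (b i) (deltaSeq δ0 n) s')
          = ∑ i ∈ A, (tentFn (a i) (b i) (deltaSeq δ0 n) s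
            - tentFn (a i) (b i) (deltaSeq δ0 n) s') := by
        rw [← Finset.sum_sub_distrib]
        refine (Finset.sum_subset (by rw [hA]; exact Finset.filter_subset _ _) ?_).symm
        intro i hi hiA
        have hmem : i ∈ Finset.range n \ A := Finset.mem_sdiff.2 ⟨hi, hiA⟩
        have hsV : s ∈ V i := Set.mem_iInter₂.1 hs i hi
        have hs'V : s' ∈ V i := Set.mem_iInter₂.1 hs' i hi
        rw [hVconst i hmem s hsV, hVconst i hmem s' hs'V, sub_self]
      have hbound : ∀ i ∈ A, |tentFn (a i) (b i) (deltaSeq δ0 n) s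
          - tentFn (a i) (b i) (deltaSeq δ0 n) s'| ≤ (deltaSeq δ0 n)⁻¹ * |s - s'| := by
        intro i _
        have := (lipschitzWith_tentFn (a i) (b i) (hΔpos n)).dist_le_mul s s'
        rwa [Real.dist_eq, Real.dist_eq,
          Real.coe_toNNReal _ (inv_nonneg.2 (hΔpos n).le)] at this
      calc |(∑ i ∈ Finset.range n, tentFn (a i) (b i) (deltaSeq δ0 n) s)
            - (∑ i ∈ Finset.range n, tentFn (a i) (b i) (deltaSeq δ0 n) s')|
          = |∑ i ∈ A, (tentFn (a i) (b i) (deltaSeq δ0 n) s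
              - tentFn (a i) (b i) (deltaSeq δ0 n) s')| := by rw [hdiff]
        _ ≤ ∑ i ∈ A, |tentFn (a i) (b i) (deltaSeq δ0 n) s
              - tentFn (a i) (b i) (deltaSeq δ0 n) s'| := Finset.abs_sum_le_sum_abs _ _
        _ ≤ ∑ i ∈ A, (deltaSeq δ0 n)⁻¹ * |s - s'| := Finset.sum_le_sum hbound
        _ = A.card * (deltaSeq δ0 n)⁻¹ * |s - s'| := by
            rw [Finset.sum_const, nsmul_eq_mul]; ring
    have hminlip : LipschitzWith 1 (fun y : ℝ => min 1 y) := by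
      have h1 := (LipschitzWith.const (1:ℝ)).min LipschitzWith.id
      simpa using h1
    have huW : LipschitzOnWith (1 * K)
        (fun s => min 1 (∑ i ∈ Finset.range n, tentFn (a i) (b i) (deltaSeq δ0 n) s)) W :=
      hminlip.comp_lipschitzOnWith hgW
    have hUW : LipschitzOnWith (1 * K)
        (fun y : (Set.Icc (0:ℝ) D) =>
          min 1 (∑ i ∈ Finset.range n, tentFn (a i) (b i) (deltaSeq δ0 n) (y : ℝ)))
        ((Subtype.val : (Set.Icc (0:ℝ) D) → ℝ) ⁻¹' W) := by
      intro p hp q hq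
      have := huW hp hq
      simpa [Subtype.edist_eq] using this
    have hWpre : ((Subtype.val : (Set.Icc (0:ℝ) D) → ℝ) ⁻¹' W) ∈ 𝓝 x :=
      ContinuousAt.preimage_mem_nhds continuous_subtype_val.continuousAt hWnhds
    have hslopeK := slopeAt_le_of_lipschitzOnWith hWpre hUW
    calc ENNReal.ofReal (slopeAt (fun y : (Set.Icc (0:ℝ) D) =>
          min 1 (∑ i ∈ Finset.range n, tentFn (a i) (b i) (deltaSeq δ0 n) (y : ℝ))) x)
        ≤ ENNReal.ofReal ((1 * K : ℝ≥0) : ℝ) := ENNReal.ofReal_le_ofReal hslopeK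
      _ = ((1 * K : ℝ≥0) : ℝ≥0∞) := ENNReal.ofReal_coe_nnreal
      _ = ∑ i ∈ A, ENNReal.ofReal (deltaSeq δ0 n)⁻¹ := by
          rw [one_mul, Finset.sum_const, nsmul_eq_mul, hK, ENNReal.coe_mul]
          simp [ENNReal.ofReal]
      _ ≤ ∑ i ∈ Finset.range n,
            (R n i).indicator (fun _ => ENNReal.ofReal (deltaSeq δ0 n)⁻¹) t := by
          have hstep : (∑ i ∈ A, ENNReal.ofReal (deltaSeq δ0 n)⁻¹)
              = ∑ i ∈ A, (R n i).indicator (fun _ => ENNReal.ofReal (deltaSeq δ0 n)⁻¹) t := by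
            refine Finset.sum_congr rfl fun i hi => ?_
            rw [hA] at hi
            rw [Set.indicator_of_mem ((Finset.mem_filter.1 hi).2)]
          rw [hstep]
          exact Finset.sum_le_sum_of_subset (by rw [hA]; exact Finset.filter_subset _ _)
  -- slope integral bound
  have hIbound : ∀ n, (∫⁻ x, ENNReal.ofReal (slopeAt (fun y : (Set.Icc (0:ℝ) D) =>
        min 1 (∑ i ∈ Finset.range n, tentFn (a i) (b i) (deltaSeq δ0 n) (y : ℝ))) x)
      ∂(Measure.comap (Subtype.val : (Set.Icc (0:ℝ) D) → ℝ) μ)) ≤ S + ENNReal.ofReal εr := by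
    intro n
    calc (∫⁻ x, ENNReal.ofReal (slopeAt (fun y : (Set.Icc (0:ℝ) D) =>
            min 1 (∑ i ∈ Finset.range n, tentFn (a i) (b i) (deltaSeq δ0 n) (y : ℝ))) x)
          ∂(Measure.comap (Subtype.val : (Set.Icc (0:ℝ) D) → ℝ) μ))
        ≤ ∫⁻ x : (Set.Icc (0:ℝ) D), (∑ i ∈ Finset.range n,
            (R n i).indicator (fun _ => ENNReal.ofReal (deltaSeq δ0 n)⁻¹) (x : ℝ))
          ∂(Measure.comap (Subtype.val : (Set.Icc (0:ℝ) D) → ℝ) μ) := lintegral_mono (hslope n)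
      _ = ∫⁻ s in Set.Icc (0:ℝ) D, (∑ i ∈ Finset.range n,
            (R n i).indicator (fun _ => ENNReal.ofReal (deltaSeq δ0 n)⁻¹) s) ∂μ :=
          lintegral_subtype_comap measurableSet_Icc (fun s => ∑ i ∈ Finset.range n,
            (R n i).indicator (fun _ => ENNReal.ofReal (deltaSeq δ0 n)⁻¹) s)
      _ ≤ ∫⁻ s, (∑ i ∈ Finset.range n,
            (R n i).indicator (fun _ => ENNReal.ofReal (deltaSeq δ0 n)⁻¹) s) ∂μ :=
          lintegral_mono' Measure.restrict_le_self le_rfl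
      _ = ∑ i ∈ Finset.range n, ENNReal.ofReal (deltaSeq δ0 n)⁻¹ * μ (R n i) := by
          rw [lintegral_finset_sum _ fun i _ => measurable_const.indicator (hRmeas n i)]
          exact Finset.sum_congr rfl fun i _ => lintegral_indicator_const (hRmeas n i) _
      _ ≤ ∑ i ∈ Finset.range n,
            (ENNReal.ofReal (h (a i) + e i) + ENNReal.ofReal (h (b i) + e i)) := by
          refine Finset.sum_le_sum fun i hi => ?_
          have h1 := hμR n i (Finset.mem_range.1 hi)
          have hone : ENNReal.ofReal (deltaSeq δ0 n)⁻¹ * ENNReal.ofReal (deltaSeq δ0 n) = 1 := by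
            rw [← ENNReal.ofReal_mul (inv_nonneg.2 (hΔpos n).le),
              inv_mul_cancel₀ (hΔpos n).ne', ENNReal.ofReal_one]
          calc ENNReal.ofReal (deltaSeq δ0 n)⁻¹ * μ (R n i)
              ≤ ENNReal.ofReal (deltaSeq δ0 n)⁻¹ * (ENNReal.ofReal (deltaSeq δ0 n) *
                (ENNReal.ofReal (h (a i) + e i) + ENNReal.ofReal (h (b i) + e i))) :=
                mul_le_mul_right h1 _
            _ = (ENNReal.ofReal (deltaSeq δ0 n)⁻¹ * ENNReal.ofReal (deltaSeq δ0 n)) *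
                (ENNReal.ofReal (h (a i) + e i) + ENNReal.ofReal (h (b i) + e i)) := by ring
            _ = ENNReal.ofReal (h (a i) + e i) + ENNReal.ofReal (h (b i) + e i) := by
                rw [hone, one_mul]
      _ ≤ S + ENNReal.ofReal εr := hsum n
  -- pointwise L¹ bound
  have hg_nonneg : ∀ n (t : ℝ),
      0 ≤ ∑ i ∈ Finset.range n, tentFn (a i) (b i) (deltaSeq δ0 n) t :=
    fun n t => Finset.sum_nonneg fun i _ => tentFn_nonneg _ _ _ _
  have hu01 : ∀ n (t : ℝ),
      0 ≤ min 1 (∑ i ∈ Finset.range n, tentFn (a i) (b i) (deltaSeq δ0 n) t) ∧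
      min 1 (∑ i ∈ Finset.range n, tentFn (a i) (b i) (deltaSeq δ0 n) t) ≤ 1 :=
    fun n t => ⟨le_min zero_le_one (hg_nonneg n t), min_le_left _ _⟩
  have habs : ∀ n (t : ℝ),
      |min 1 (∑ i ∈ Finset.range n, tentFn (a i) (b i) (deltaSeq δ0 n) t)
        - E.indicator (fun _ => (1:ℝ)) t| ≤ 1 := by
    intro n t
    obtain ⟨h0, h1⟩ := hu01 n t
    by_cases ht : t ∈ E
    · rw [Set.indicator_of_mem ht, abs_le]; constructor <;> linarith
    · rw [Set.indicator_of_notMem ht, sub_zero, abs_of_nonneg h0]; exact h1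
  have hpt : ∀ n (t : ℝ), ENNReal.ofReal
      |min 1 (∑ i ∈ Finset.range n, tentFn (a i) (b i) (deltaSeq δ0 n) t)
        - E.indicator (fun _ => (1:ℝ)) t|
      ≤ (⋃ i ∈ Finset.range n, R n i).indicator (fun _ => (1:ℝ≥0∞)) t
        + (⋃ j, Set.Icc (a (n + j)) (b (n + j))).indicator (fun _ => (1:ℝ≥0∞)) t := by
    intro n t
    by_cases hU : t ∈ ⋃ i ∈ Finset.range n, R n i
    · refine le_trans ?_ le_self_add
      rw [Set.indicator_of_mem hU]
      exact ENNReal.ofReal_le_one.2 (habs n t)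
    · by_cases htE : t ∈ E
      · obtain ⟨j, hj⟩ : ∃ j, t ∈ Set.Icc (a j) (b j) := Set.mem_iUnion.1 (by rwa [hE] at htE)
        by_cases hjn : j < n
        · have hgt : (1:ℝ) ≤ ∑ i ∈ Finset.range n, tentFn (a i) (b i) (deltaSeq δ0 n) t := by
            calc (1:ℝ) = tentFn (a j) (b j) (deltaSeq δ0 n) t := (tentFn_eq_one _ hj).symm
              _ ≤ _ := Finset.single_le_sum (fun i _ => tentFn_nonneg _ _ _ _)
                  (Finset.mem_range.2 hjn)
          rw [min_eq_left hgt, Set.indicator_of_mem htE, sub_self, abs_zero, ENNReal.ofReal_zero]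
          exact zero_le
        · have htail : t ∈ ⋃ j', Set.Icc (a (n + j')) (b (n + j')) := by
            refine Set.mem_iUnion.2 ⟨j - n, ?_⟩
            have hnj : n + (j - n) = j := by omega
            rw [hnj]; exact hj
          refine le_trans ?_ le_add_self
          rw [Set.indicator_of_mem htail]
          exact ENNReal.ofReal_le_one.2 (habs n t)
      · have hzero : ∀ i ∈ Finset.range n, tentFn (a i) (b i) (deltaSeq δ0 n) t = 0 := by
          intro i hi
          refine tentFn_eq_zero_of_not_mem (hab i) (hΔpos n) ?_
          intro hmem
          rcases Set.mem_Icc.1 hmem with ⟨hm1, hm2⟩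
          by_cases hcase : t ∈ Set.Icc (a i) (b i)
          · exact htE (by rw [hE]; exact Set.mem_iUnion.2 ⟨i, hcase⟩)
          · refine hU (Set.mem_iUnion₂.2 ⟨i, hi, ?_⟩)
            rw [Set.mem_Icc, not_and_or, not_le, not_le] at hcase
            rw [hR]
            rcases hcase with hc | hc
            · exact Set.mem_union_left _ (Set.mem_Icc.2 ⟨hm1, hc.le⟩)
            · exact Set.mem_union_right _ (Set.mem_Icc.2 ⟨hc.le, hm2⟩)
        rw [Finset.sum_eq_zero hzero, min_eq_right zero_le_one, Set.indicator_of_notMem htE,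
          sub_zero, abs_zero, ENNReal.ofReal_zero]
        exact zero_le
  -- L¹ convergence
  have hUnionMeas : ∀ n, MeasurableSet (⋃ i ∈ Finset.range n, R n i) :=
    fun n => (Finset.range n).measurableSet_biUnion fun i _ => hRmeas n i
  have htailMeas : ∀ n, MeasurableSet (⋃ j, Set.Icc (a (n + j)) (b (n + j))) :=
    fun n => MeasurableSet.iUnion fun j => measurableSet_Icc
  have hμUn : ∀ n, μ (⋃ i ∈ Finset.range n, R n i)
      ≤ ENNReal.ofReal (deltaSeq δ0 n) * (S + ENNReal.ofReal εr) := by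
    intro n
    calc μ (⋃ i ∈ Finset.range n, R n i) ≤ ∑ i ∈ Finset.range n, μ (R n i) :=
          measure_biUnion_finset_le _ _
      _ ≤ ∑ i ∈ Finset.range n, ENNReal.ofReal (deltaSeq δ0 n) *
            (ENNReal.ofReal (h (a i) + e i) + ENNReal.ofReal (h (b i) + e i)) :=
          Finset.sum_le_sum fun i hi => hμR n i (Finset.mem_range.1 hi)
      _ = ENNReal.ofReal (deltaSeq δ0 n) * ∑ i ∈ Finset.range n,
            (ENNReal.ofReal (h (a i) + e i) + ENNReal.ofReal (h (b i) + e i)) := by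
          rw [Finset.mul_sum]
      _ ≤ ENNReal.ofReal (deltaSeq δ0 n) * (S + ENNReal.ofReal εr) :=
          mul_le_mul_right (hsum n) _
  have hμtail : ∀ n, μ (⋃ j, Set.Icc (a (n + j)) (b (n + j)))
      ≤ ∑' j, μ (Set.Icc (a (j + n)) (b (j + n))) := by
    intro n
    refine (measure_iUnion_le _).trans (le_of_eq (tsum_congr fun j => ?_))
    rw [add_comm]
  have hL1 : Tendsto (fun n => ∫⁻ x, ENNReal.ofReal
      |min 1 (∑ i ∈ Finset.range n, tentFn (a i) (b i) (deltaSeq δ0 n) ((x : ℝ)))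
        - ((Subtype.val : (Set.Icc (0:ℝ) D) → ℝ) ⁻¹' E).indicator (fun _ => (1:ℝ)) x|
      ∂(Measure.comap (Subtype.val : (Set.Icc (0:ℝ) D) → ℝ) μ)) atTop (𝓝 0) := by
    have hbnd : ∀ n, (∫⁻ x, ENNReal.ofReal
        |min 1 (∑ i ∈ Finset.range n, tentFn (a i) (b i) (deltaSeq δ0 n) ((x : ℝ)))
          - ((Subtype.val : (Set.Icc (0:ℝ) D) → ℝ) ⁻¹' E).indicator (fun _ => (1:ℝ)) x|
        ∂(Measure.comap (Subtype.val : (Set.Icc (0:ℝ) D) → ℝ) μ))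
        ≤ ENNReal.ofReal (deltaSeq δ0 n) * (S + ENNReal.ofReal εr)
          + ∑' j, μ (Set.Icc (a (j + n)) (b (j + n))) := by
      intro n
      have heq1 : ∀ x : (Set.Icc (0:ℝ) D), ENNReal.ofReal
          |min 1 (∑ i ∈ Finset.range n, tentFn (a i) (b i) (deltaSeq δ0 n) ((x : ℝ)))
            - ((Subtype.val : (Set.Icc (0:ℝ) D) → ℝ) ⁻¹' E).indicator (fun _ => (1:ℝ)) x|
          = ENNReal.ofReal
          |min 1 (∑ i ∈ Finset.range n, tentFn (a i) (b i) (deltaSeq δ0 n) ((x : ℝ)))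
            - E.indicator (fun _ => (1:ℝ)) (x : ℝ)| := by
        intro x
        by_cases hx : (x : ℝ) ∈ E
        · rw [Set.indicator_of_mem hx, Set.indicator_of_mem (Set.mem_preimage.2 hx)]
        · rw [Set.indicator_of_notMem hx,
            Set.indicator_of_notMem (fun hc => hx (Set.mem_preimage.1 hc))]
      calc (∫⁻ x, ENNReal.ofReal
            |min 1 (∑ i ∈ Finset.range n, tentFn (a i) (b i) (deltaSeq δ0 n) ((x : ℝ)))
              - ((Subtype.val : (Set.Icc (0:ℝ) D) → ℝ) ⁻¹' E).indicator (fun _ => (1:ℝ)) x|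
            ∂(Measure.comap (Subtype.val : (Set.Icc (0:ℝ) D) → ℝ) μ))
          = ∫⁻ x : (Set.Icc (0:ℝ) D), ENNReal.ofReal
            |min 1 (∑ i ∈ Finset.range n, tentFn (a i) (b i) (deltaSeq δ0 n) ((x : ℝ)))
              - E.indicator (fun _ => (1:ℝ)) (x : ℝ)|
            ∂(Measure.comap (Subtype.val : (Set.Icc (0:ℝ) D) → ℝ) μ) := lintegral_congr heq1
        _ = ∫⁻ s in Set.Icc (0:ℝ) D, ENNReal.ofReal
            |min 1 (∑ i ∈ Finset.range n, tentFn (a i) (b i) (deltaSeq δ0 n) s)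
              - E.indicator (fun _ => (1:ℝ)) s| ∂μ :=
            lintegral_subtype_comap measurableSet_Icc (fun s => ENNReal.ofReal
              |min 1 (∑ i ∈ Finset.range n, tentFn (a i) (b i) (deltaSeq δ0 n) s)
                - E.indicator (fun _ => (1:ℝ)) s|)
        _ ≤ ∫⁻ s, ENNReal.ofReal
            |min 1 (∑ i ∈ Finset.range n, tentFn (a i) (b i) (deltaSeq δ0 n) s)
              - E.indicator (fun _ => (1:ℝ)) s| ∂μ := lintegral_mono' Measure.restrict_le_self le_rfl
        _ ≤ ∫⁻ s, ((⋃ i ∈ Finset.range n, R n i).indicator (fun _ => (1:ℝ≥0∞)) s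
              + (⋃ j, Set.Icc (a (n + j)) (b (n + j))).indicator (fun _ => (1:ℝ≥0∞)) s) ∂μ :=
            lintegral_mono fun s => hpt n s
        _ = μ (⋃ i ∈ Finset.range n, R n i) + μ (⋃ j, Set.Icc (a (n + j)) (b (n + j))) := by
            rw [lintegral_add_left (measurable_const.indicator (hUnionMeas n)),
              lintegral_indicator_const (hUnionMeas n),
              lintegral_indicator_const (htailMeas n), one_mul, one_mul]
        _ ≤ ENNReal.ofReal (deltaSeq δ0 n) * (S + ENNReal.ofReal εr)
              + ∑' j, μ (Set.Icc (a (j + n)) (b (j + n))) := add_le_add (hμUn n) (hμtail n)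
    have t1 : Tendsto (fun n => ENNReal.ofReal (deltaSeq δ0 n) * (S + ENNReal.ofReal εr))
        atTop (𝓝 0) := by
      have hne : S + ENNReal.ofReal εr ≠ ⊤ :=
        ENNReal.add_ne_top.2 ⟨hStop.ne, ENNReal.ofReal_ne_top⟩
      have := ENNReal.Tendsto.mul_const hΔtends (Or.inr hne)
      rwa [zero_mul] at this
    have t2 : Tendsto (fun n => ∑' j, μ (Set.Icc (a (j + n)) (b (j + n)))) atTop (𝓝 0) :=
      ENNReal.tendsto_sum_nat_add _ htsum_fin
    have tsumall := t1.add t2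
    rw [add_zero] at tsumall
    exact tendsto_of_tendsto_of_tendsto_of_le_of_le tendsto_const_nhds tsumall
      (fun n => zero_le) hbnd
  -- global Lipschitz
  have hKlip : ∀ n, ∃ K : ℝ≥0, LipschitzWith K (fun y : (Set.Icc (0:ℝ) D) =>
      min 1 (∑ i ∈ Finset.range n, tentFn (a i) (b i) (deltaSeq δ0 n) (y : ℝ))) := by
    intro n
    have hgl : ∀ s : Finset ℕ, ∃ Kg : ℝ≥0, LipschitzWith Kg
        (fun t : ℝ => ∑ i ∈ s, tentFn (a i) (b i) (deltaSeq δ0 n) t) := by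
      intro s
      induction s using Finset.induction_on with
      | empty => exact ⟨0, by simpa using LipschitzWith.const (0:ℝ)⟩
      | @insert j s hj ih =>
        obtain ⟨Kg, hKg⟩ := ih
        refine ⟨Real.toNNReal (deltaSeq δ0 n)⁻¹ + Kg, ?_⟩
        have := (lipschitzWith_tentFn (a j) (b j) (hΔpos n)).add hKg
        have heq : (fun t : ℝ => ∑ i ∈ insert j s, tentFn (a i) (b i) (deltaSeq δ0 n) t)
            = fun t : ℝ => tentFn (a j) (b j) (deltaSeq δ0 n) t
              + ∑ i ∈ s, tentFn (a i) (b i) (deltaSeq δ0 n) t := by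
          funext t; rw [Finset.sum_insert hj]
        rwa [heq]
    obtain ⟨Kg, hKg⟩ := hgl (Finset.range n)
    have hminlip : LipschitzWith 1 (fun y : ℝ => min 1 y) := by
      have h1 := (LipschitzWith.const (1:ℝ)).min LipschitzWith.id
      simpa using h1
    have hval : LipschitzWith 1 (Subtype.val : (Set.Icc (0:ℝ) D) → ℝ) :=
      isometry_subtype_coe.lipschitz
    exact ⟨1 * Kg * 1, ((hminlip.comp hKg).comp hval)⟩
  -- conclusion
  have hmem : Filter.liminf (fun n => ∫⁻ x, ENNReal.ofReal (slopeAt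
      (fun y : (Set.Icc (0:ℝ) D) =>
        min 1 (∑ i ∈ Finset.range n, tentFn (a i) (b i) (deltaSeq δ0 n) (y : ℝ))) x)
      ∂(Measure.comap (Subtype.val : (Set.Icc (0:ℝ) D) → ℝ) μ)) atTop
      ∈ { p : ℝ≥0∞ | ∃ u : ℕ → (Set.Icc (0:ℝ) D) → ℝ,
        (∀ n, ∃ K : NNReal, LipschitzWith K (u n)) ∧
        Filter.Tendsto (fun n => ∫⁻ x, ENNReal.ofReal |u n x -
            ((Subtype.val : (Set.Icc (0:ℝ) D) → ℝ) ⁻¹' E).indicator (fun _ => (1:ℝ)) x|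
          ∂(Measure.comap (Subtype.val : (Set.Icc (0:ℝ) D) → ℝ) μ)) atTop (𝓝 0) ∧
        p = Filter.liminf (fun n => ∫⁻ x, ENNReal.ofReal (slopeAt (u n) x)
          ∂(Measure.comap (Subtype.val : (Set.Icc (0:ℝ) D) → ℝ) μ)) atTop } :=
    ⟨fun n (y : (Set.Icc (0:ℝ) D)) =>
      min 1 (∑ i ∈ Finset.range n, tentFn (a i) (b i) (deltaSeq δ0 n) (y : ℝ)),
      hKlip, hL1, rfl⟩
  calc perimeterOn (Set.Icc 0 D) μ E
      = perimeter (Measure.comap (Subtype.val : (Set.Icc (0:ℝ) D) → ℝ) μ)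
        ((Subtype.val : (Set.Icc (0:ℝ) D) → ℝ) ⁻¹' E) := rfl
    _ ≤ Filter.liminf (fun n => ∫⁻ x, ENNReal.ofReal (slopeAt
        (fun y : (Set.Icc (0:ℝ) D) =>
          min 1 (∑ i ∈ Finset.range n, tentFn (a i) (b i) (deltaSeq δ0 n) (y : ℝ))) x)
        ∂(Measure.comap (Subtype.val : (Set.Icc (0:ℝ) D) → ℝ) μ)) atTop := sInf_le hmem
    _ ≤ S + ENNReal.ofReal εr := by
        refine le_trans (Filter.liminf_le_liminf (Filter.Eventually.of_forall hIbound)) ?_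
        rw [Filter.liminf_const]
    _ = S + ε' := by rw [hofεr]
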